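/- arXiv:2010.11179 — 2 statements merged into one kernel-verified Lean document; each statement's English description precedes it below -/
import Mathlib

section
/- Let α, β₀ be reals with 0 < α < 1/2, β₀ > 0 and α + β₀ < 1/2. Let p be a prime such that for every nontrivial multiplicative character χ of F_p and all subsets S, T ⊆ F_p with |S| > p^α and |T| > p^α, one has |Σ_{s∈S, t∈T} χ(s−t)| ≤ p^{−β₀}·|S|·|T|. Let k ≥ 2 be a divisor of p − 1 and let τ be a real number with α + β₀ < τ < 1/2. Then the matrix Φ_p^{(k)} has the (K, θ)-flat restricted isometry property with K = ⌊p^{τ+β₀}⌋ and θ = (k−1)·p^{τ−1/2}; that is, for every pair of disjoint subsets I, J ⊆ F_p with |I| ≤ p^{τ+β₀} and |J| ≤ p^{τ+β₀}, one has |⟨Σ_{i∈I} φ_i, Σ_{j∈J} φ_j⟩| ≤ (k−1)·p^{τ−1/2}·√(|I|·|J|). -/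
/-- The canonical additive character `ψ` of `F_p`, `ψ(x) = exp(2π√−1·x/p)`. -/
noncomputable def psi (p : ℕ) (x : ZMod p) : ℂ :=
  Complex.exp (2 * Real.pi * Complex.I * (x.val : ℂ) / (p : ℂ))

/-- The `((p+k−1)/k) × p` matrix `Φ_p^{(k)}`: columns indexed by `a ∈ F_p`;
rows indexed by `Option R_p^{(k)}` where `R_p^{(k)}` is the set of nonzero `k`-th
power residues.  The `none` row has entries `1/√p`, and the row of `b ∈ R_p^{(k)}`
has entries `√(k/p)·ψ(b·a)`. -/
noncomputable def Phi (p k : ℕ) :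
    Matrix (Option {b : ZMod p // ∃ x : ZMod p, x ≠ 0 ∧ x ^ k = b}) (ZMod p) ℂ :=
  fun r a =>
    match r with
    | none => ((1 / Real.sqrt p : ℝ) : ℂ)
    | some b => ((Real.sqrt ((k : ℝ) / (p : ℝ)) : ℝ) : ℂ) * psi p (b.1 * a)

/-- A multiplicative character of `F_p`. -/
def IsMulChar (p : ℕ) (χ : ZMod p → ℂ) : Prop :=
  χ 0 = 0 ∧ (∀ x : ZMod p, x ≠ 0 → ‖χ x‖ = 1) ∧
    ∀ x y : ZMod p, x ≠ 0 → y ≠ 0 → χ (x * y) = χ x * χ y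

/-- A nontrivial multiplicative character of `F_p`. -/
def IsNontrivMulChar (p : ℕ) (χ : ZMod p → ℂ) : Prop :=
  IsMulChar p χ ∧ ∃ x : ZMod p, x ≠ 0 ∧ χ x ≠ 1


section Helpers
open Finset

variable {p : ℕ} [NeZero p]

noncomputable def psiA (p : ℕ) [NeZero p] : AddChar (ZMod p) ℂ :=
  AddChar.zmodChar p (ζ := Complex.exp (2 * Real.pi * Complex.I / p)) <| by
    have hp : (p : ℂ) ≠ 0 := Nat.cast_ne_zero.mpr (NeZero.ne p)
    rw [← Complex.exp_nat_mul,
      show (p : ℂ) * (2 * Real.pi * Complex.I / p) = 2 * Real.pi * Complex.I by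
        field_simp]
    exact Complex.exp_two_pi_mul_I

lemma psiA_apply (x : ZMod p) : psiA p x = psi p x := by
  simp only [psiA, AddChar.zmodChar_apply, psi]
  rw [← Complex.exp_nat_mul]
  congr 1
  ring

lemma abs_psi (x : ZMod p) : ‖psi p x‖ = 1 := by
  rw [psi, show 2 * (Real.pi : ℂ) * Complex.I * ((x.val : ℕ) : ℂ) / (p : ℂ)
      = ((2 * Real.pi * (x.val : ℝ) / (p : ℝ) : ℝ) : ℂ) * Complex.I by push_cast; ring,
    Complex.norm_exp_ofReal_mul_I]

lemma conj_psi (x : ZMod p) : (starRingEnd ℂ) (psi p x) = psi p (-x) := by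
  have h1 : psi p x * psi p (-x) = 1 := by
    rw [← psiA_apply, ← psiA_apply, ← AddChar.map_add_eq_mul, add_neg_cancel,
      AddChar.map_zero_eq_one]
  calc (starRingEnd ℂ) (psi p x)
      = (psi p x)⁻¹ := (Complex.inv_eq_conj (abs_psi x)).symm
    _ = psi p (-x) := inv_eq_of_mul_eq_one_right h1

lemma psi_zero : psi p 0 = 1 := by
  simp [psi]

end Helpers

section Prime

variable {p : ℕ} [hpF : Fact p.Prime]

lemma psiA_prim : (psiA p).IsPrimitive :=
  AddChar.zmodChar_primitive_of_primitive_root p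
    (Complex.isPrimitiveRoot_exp p (NeZero.ne p))

lemma sum_psi_mul {c : ZMod p} (hc : c ≠ 0) : ∑ y : ZMod p, psi p (y * c) = 0 := by
  have hne : AddChar.mulShift (psiA p) c ≠ 1 := psiA_prim hc
  have h := AddChar.sum_eq_zero_of_ne_one hne
  rw [← h]
  refine Finset.sum_congr rfl fun y _ => ?_
  rw [AddChar.mulShift_apply, psiA_apply, mul_comm]

lemma gauss_abs {χ : MulChar (ZMod p) ℂ} (hχ : χ ≠ 1) :
    ‖gaussSum χ (psiA p)‖ = Real.sqrt p := by
  have hcard := gaussSum_mul_gaussSum_eq_card hχ (psiA_prim (p := p))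
  have hconj : gaussSum χ⁻¹ (psiA p)⁻¹ = (starRingEnd ℂ) (gaussSum χ (psiA p)) := by
    rw [gaussSum, gaussSum, map_sum]
    refine Finset.sum_congr rfl fun y _ => ?_
    rw [map_mul]
    congr 1
    · rw [← MulChar.star_apply', starRingEnd_apply]
    · rw [AddChar.inv_apply, psiA_apply, psiA_apply, conj_psi]
  have hval : gaussSum χ (psiA p) * (starRingEnd ℂ) (gaussSum χ (psiA p)) = (p : ℂ) := by
    rw [← hconj, hcard, ZMod.card]
  rw [Complex.mul_conj] at hval
  have h2 : Complex.normSq (gaussSum χ (psiA p)) = p := by exact_mod_cast hval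
  rw [Complex.norm_def, h2]

lemma gauss_shift (χ : MulChar (ZMod p) ℂ) {c : ZMod p} (hc : c ≠ 0) :
    ∑ y : ZMod p, χ y * psi p (y * c) = (χ c)⁻¹ * gaussSum χ (psiA p) := by
  have hcu : IsUnit c := hc.isUnit
  have key := gaussSum_mulShift χ (psiA p) hcu.unit
  rw [hcu.unit_spec] at key
  have hsum : gaussSum χ (AddChar.mulShift (psiA p) c) = ∑ y : ZMod p, χ y * psi p (y * c) := by
    rw [gaussSum]
    refine Finset.sum_congr rfl fun y _ => ?_
    rw [AddChar.mulShift_apply, psiA_apply, mul_comm c y]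
  rw [hsum] at key
  have hne : χ c ≠ 0 := by
    intro h
    have : χ c * χ c⁻¹ = 1 := by rw [← map_mul, mul_inv_cancel₀ hc, MulChar.map_one]
    rw [h, zero_mul] at this
    exact zero_ne_one this
  have h2 := congrArg (fun z => (χ c)⁻¹ * z) key
  simp only [← mul_assoc, inv_mul_cancel₀ hne, one_mul] at h2
  exact h2

lemma abs_mulchar {χ : MulChar (ZMod p) ℂ} {x : ZMod p} (hx : x ≠ 0) :
    ‖χ x‖ = 1 := by
  have h : (χ x) ^ (p - 1) = 1 := by
    rw [← map_pow, ZMod.pow_card_sub_one_eq_one hx, MulChar.map_one]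
  have hne : p - 1 ≠ 0 := Nat.sub_ne_zero_of_lt hpF.out.one_lt
  exact Complex.norm_eq_one_of_pow_eq_one h hne

end Prime


section Prime2

variable {p : ℕ} [hpF : Fact p.Prime]

lemma isNontriv {χ : MulChar (ZMod p) ℂ} (hχ : χ ≠ 1) : IsNontrivMulChar p ⇑χ := by
  refine ⟨⟨χ.map_zero, fun x hx => abs_mulchar hx, fun x y _ _ => map_mul χ x y⟩, ?_⟩
  by_contra h
  push_neg at h
  exact hχ (MulChar.eq_one_iff.mpr fun a => h a (Units.ne_zero a) )

lemma trivial_bound {χ : ZMod p → ℂ} (h : IsMulChar p χ) (I J : Finset (ZMod p)) :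
    ‖∑ s ∈ I, ∑ t ∈ J, χ (s - t)‖ ≤ (I.card : ℝ) * (J.card : ℝ) := by
  have h1 : ∀ x : ZMod p, ‖χ x‖ ≤ 1 := by
    intro x
    by_cases hx : x = 0
    · simp [hx, h.1]
    · rw [h.2.1 x hx]
  calc ‖∑ s ∈ I, ∑ t ∈ J, χ (s - t)‖
      ≤ ∑ s ∈ I, ‖∑ t ∈ J, χ (s - t)‖ := norm_sum_le _ _
    _ ≤ ∑ s ∈ I, ∑ t ∈ J, ‖χ (s - t)‖ :=
        Finset.sum_le_sum fun s _ => norm_sum_le _ _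
    _ ≤ ∑ s ∈ I, ∑ t ∈ J, (1 : ℝ) :=
        Finset.sum_le_sum fun s _ => Finset.sum_le_sum fun t _ => h1 _
    _ = (I.card : ℝ) * (J.card : ℝ) := by simp [mul_comm]

end Prime2


/-- under the property `𝒫(α, β₀)` for all nontrivial multiplicative
characters of `F_p`, with `α + β₀ < 1/2`, `k ≥ 2` a divisor of `p − 1` and
`α + β₀ < τ < 1/2`, the matrix `Φ_p^{(k)}` has the
`(⌊p^{τ+β₀}⌋, (k−1)·p^{τ−1/2})`-flat RIP: for all disjoint `I, J ⊆ F_p` with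
`|I|, |J| ≤ p^{τ+β₀}`, `|⟨Σ_{i∈I} φ_i, Σ_{j∈J} φ_j⟩| ≤ (k−1)·p^{τ−1/2}·√(|I|·|J|)`. -/
theorem stmt_2 (α β₀ : ℝ) (hα0 : 0 < α) (hα : α < 1 / 2) (hβ0 : 0 < β₀)
    (hαβ : α + β₀ < 1 / 2) (p : ℕ) (hp : p.Prime) [NeZero p]
    (hP : ∀ χ : ZMod p → ℂ, IsNontrivMulChar p χ →
      ∀ S T : Finset (ZMod p),
        (p : ℝ) ^ α < (S.card : ℝ) → (p : ℝ) ^ α < (T.card : ℝ) →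
          ‖∑ s ∈ S, ∑ t ∈ T, χ (s - t)‖ ≤
            (p : ℝ) ^ (-β₀) * (S.card : ℝ) * (T.card : ℝ))
    (k : ℕ) (hk2 : 2 ≤ k) (hkdvd : k ∣ p - 1)
    (τ : ℝ) (hτ1 : α + β₀ < τ) (hτ2 : τ < 1 / 2) :
    ∀ I J : Finset (ZMod p), Disjoint I J →
      (I.card : ℝ) ≤ (p : ℝ) ^ (τ + β₀) → (J.card : ℝ) ≤ (p : ℝ) ^ (τ + β₀) →
        ‖∑ r, (∑ i ∈ I, Phi p k r i) * (starRingEnd ℂ) (∑ j ∈ J, Phi p k r j)‖ ≤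
          ((k : ℝ) - 1) * (p : ℝ) ^ (τ - 1 / 2) *
            Real.sqrt ((I.card : ℝ) * (J.card : ℝ)) := by
  haveI : Fact p.Prime := ⟨hp⟩
  classical
  intro I J hIJ hI hJ
  have hp1R : (1 : ℝ) < p := by exact_mod_cast hp.one_lt
  have hp0R : (0 : ℝ) < p := by linarith
  have hk0 : k ≠ 0 := by omega
  haveI : NeZero k := ⟨hk0⟩
  have hkdvd' : k ∣ Fintype.card (ZMod p) - 1 := by rwa [ZMod.card]
  obtain ⟨χ₀, hχ₀ord⟩ := MulChar.exists_mulChar_orderOf (ZMod p) hkdvd'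
    (Complex.isPrimitiveRoot_exp k hk0)
  obtain ⟨g, hg⟩ := IsCyclic.exists_generator (α := (ZMod p)ˣ)
  have hχ₀k : χ₀ ^ k = 1 := by rw [← hχ₀ord]; exact pow_orderOf_eq_one χ₀
  have hgen_pow : ∀ m : ℕ, (χ₀ ^ m) (g : ZMod p) = (χ₀ (g : ZMod p)) ^ m := by
    intro m
    rcases Nat.eq_zero_or_pos m with rfl | hm
    · simp [MulChar.one_apply_coe]
    · exact MulChar.pow_apply' χ₀ hm.ne' _
  have hprimval : IsPrimitiveRoot (χ₀ (g : ZMod p)) k := by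
    rw [IsPrimitiveRoot.iff_def]
    constructor
    · rw [← hgen_pow k, hχ₀k, MulChar.one_apply_coe]
    · intro l hl
      have hpow : χ₀ ^ l = 1 := by
        rw [MulChar.eq_iff hg, hgen_pow, hl, MulChar.one_apply_coe]
      rw [← hχ₀ord]
      exact orderOf_dvd_of_pow_eq_one hpow
  -- orthogonality
  have horth : ∀ y : ZMod p, y ≠ 0 → ¬ (∃ x : ZMod p, x ≠ 0 ∧ x ^ k = y) → χ₀ y ≠ 1 := by
    intro y hy hnP h1
    obtain ⟨u, hu⟩ : ∃ u : (ZMod p)ˣ, (u : ZMod p) = y := ⟨hy.isUnit.unit, hy.isUnit.unit_spec⟩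
    obtain ⟨n, hn⟩ : u ∈ Submonoid.powers g := mem_powers_iff_mem_zpowers.mpr (hg u)
    have hgn : g ^ n = u := hn
    have hgny : ((g : ZMod p)) ^ n = y := by rw [← Units.val_pow_eq_pow_val, hgn, hu]
    have hpow : (χ₀ (g : ZMod p)) ^ n = 1 := by
      rw [← map_pow, hgny]
      exact h1
    obtain ⟨m, hm⟩ := hprimval.dvd_of_pow_eq_one n hpow
    apply hnP
    refine ⟨(g : ZMod p) ^ m, pow_ne_zero m (Units.ne_zero g), ?_⟩
    rw [← pow_mul, show m * k = n by rw [hm]; ring, hgny]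
  have horth_sum : ∀ y : ZMod p,
      (∑ j ∈ Finset.range k, (χ₀ ^ j) y)
        = if (∃ x : ZMod p, x ≠ 0 ∧ x ^ k = y) then (k : ℂ) else 0 := by
    intro y
    by_cases hy0 : y = 0
    · subst hy0
      have hnP : ¬ (∃ x : ZMod p, x ≠ 0 ∧ x ^ k = 0) := by
        rintro ⟨x, hx, hxk⟩
        exact hx (pow_eq_zero_iff hk0 |>.mp hxk)
      rw [if_neg hnP]
      simp [MulChar.map_zero]
    · by_cases hPy : ∃ x : ZMod p, x ≠ 0 ∧ x ^ k = y
      · rw [if_pos hPy]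
        obtain ⟨x, hx0, hxk⟩ := hPy
        have hterm : ∀ j ∈ Finset.range k, (χ₀ ^ j) y = 1 := by
          intro j _
          calc (χ₀ ^ j) y = ((χ₀ ^ j) x) ^ k := by rw [← map_pow, hxk]
            _ = ((χ₀ ^ j) ^ k) x := (MulChar.pow_apply' _ hk0 _).symm
            _ = ((χ₀ ^ k) ^ j) x := by rw [← pow_mul, mul_comm, pow_mul]
            _ = 1 := by rw [hχ₀k, one_pow, MulChar.one_apply hx0.isUnit]
        rw [Finset.sum_congr rfl hterm, Finset.sum_const, Finset.card_range, nsmul_eq_mul, mul_one]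
      · rw [if_neg hPy]
        have hz : χ₀ y ≠ 1 := horth y hy0 hPy
        have hterm : ∀ j : ℕ, (χ₀ ^ j) y = (χ₀ y) ^ j := by
          intro j
          rcases Nat.eq_zero_or_pos j with rfl | hj
          · rw [pow_zero, MulChar.one_apply (Ne.isUnit hy0), pow_zero]
          · exact MulChar.pow_apply' _ hj.ne' _
        rw [Finset.sum_congr rfl fun j _ => hterm j, geom_sum_eq hz,
          show (χ₀ y) ^ k = 1 by rw [← hterm k, hχ₀k, MulChar.one_apply (Ne.isUnit hy0)],
          sub_self, zero_div]
  -- entry identity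
  have hentry : ∀ c : ZMod p, c ≠ 0 →
      ((1 : ℂ) / p + ((k : ℂ) / p) *
          ∑ b : {b : ZMod p // ∃ x : ZMod p, x ≠ 0 ∧ x ^ k = b}, psi p (b.1 * c))
        = (1 / (p : ℂ)) * ∑ j ∈ Finset.Ico 1 k,
            gaussSum (χ₀ ^ j) (psiA p) * ((χ₀ ^ j) c)⁻¹ := by
    intro c hc
    have hS : (∑ b : {b : ZMod p // ∃ x : ZMod p, x ≠ 0 ∧ x ^ k = b}, psi p (b.1 * c))
        = ∑ y ∈ Finset.univ.filter (fun b => ∃ x : ZMod p, x ≠ 0 ∧ x ^ k = b),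
            psi p (y * c) := by
      exact (Finset.sum_subtype _ (fun y => by simp) (fun y => psi p (y * c))).symm
    have hkS : (k : ℂ) * ∑ y ∈ Finset.univ.filter (fun b => ∃ x : ZMod p, x ≠ 0 ∧ x ^ k = b),
          psi p (y * c)
        = ∑ j ∈ Finset.range k, ∑ y : ZMod p, (χ₀ ^ j) y * psi p (y * c) := by
      rw [Finset.mul_sum]
      calc ∑ y ∈ Finset.univ.filter (fun b => ∃ x : ZMod p, x ≠ 0 ∧ x ^ k = b),
            (k : ℂ) * psi p (y * c)
          = ∑ y : ZMod p, (if (∃ x : ZMod p, x ≠ 0 ∧ x ^ k = y) then (k : ℂ) else 0)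
              * psi p (y * c) := by
            rw [Finset.sum_filter]
            exact Finset.sum_congr rfl fun y _ => by rw [ite_mul, zero_mul]
        _ = ∑ y : ZMod p, (∑ j ∈ Finset.range k, (χ₀ ^ j) y) * psi p (y * c) := by
            exact Finset.sum_congr rfl fun y _ => by rw [horth_sum y]
        _ = ∑ j ∈ Finset.range k, ∑ y : ZMod p, (χ₀ ^ j) y * psi p (y * c) := by
            simp_rw [Finset.sum_mul]
            exact Finset.sum_comm
    have h0 : ∑ y : ZMod p, ((χ₀ ^ 0) y) * psi p (y * c) = -1 := by
      have hterm : ∀ y ∈ Finset.univ (α := ZMod p), ((χ₀ ^ 0) y) * psi p (y * c)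
          = psi p (y * c) - (if y = 0 then 1 else 0) := by
        intro y _
        rcases eq_or_ne y 0 with rfl | hy
        · rw [pow_zero, MulChar.map_zero, zero_mul, if_pos rfl, zero_mul, psi_zero, sub_self]
        · rw [pow_zero, MulChar.one_apply hy.isUnit, one_mul, if_neg hy, sub_zero]
      rw [Finset.sum_congr rfl hterm, Finset.sum_sub_distrib, sum_psi_mul hc,
        Finset.sum_ite_eq' Finset.univ (0 : ZMod p) (fun _ => (1 : ℂ))]
      simp
    have hsplit : ∑ j ∈ Finset.range k, ∑ y : ZMod p, (χ₀ ^ j) y * psi p (y * c)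
        = -1 + ∑ j ∈ Finset.Ico 1 k, ∑ y : ZMod p, (χ₀ ^ j) y * psi p (y * c) := by
      rw [Finset.range_eq_Ico, Finset.sum_eq_sum_Ico_succ_bot (by omega : 0 < k), h0]
    have hshift : ∀ j ∈ Finset.Ico 1 k,
        (∑ y : ZMod p, (χ₀ ^ j) y * psi p (y * c))
          = gaussSum (χ₀ ^ j) (psiA p) * ((χ₀ ^ j) c)⁻¹ := by
      intro j _
      rw [gauss_shift _ hc, mul_comm]
    rw [hS, show ((k : ℂ) / p) * (∑ y ∈ Finset.univ.filter
          (fun b => ∃ x : ZMod p, x ≠ 0 ∧ x ^ k = b), psi p (y * c))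
        = (1 / (p : ℂ)) * ((k : ℂ) * ∑ y ∈ Finset.univ.filter
          (fun b => ∃ x : ZMod p, x ≠ 0 ∧ x ^ k = b), psi p (y * c)) by ring,
      hkS, hsplit, Finset.sum_congr rfl hshift]
    have hpC : (p : ℂ) ≠ 0 := Nat.cast_ne_zero.mpr (NeZero.ne p)
    field_simp
    ring

  have hmain : (∑ r, (∑ i ∈ I, Phi p k r i) * (starRingEnd ℂ) (∑ j ∈ J, Phi p k r j))
      = (1 / (p : ℂ)) * ∑ j ∈ Finset.Ico 1 k,
          gaussSum (χ₀ ^ j) (psiA p) * (∑ s ∈ I, ∑ t ∈ J, ((χ₀ ^ j) (s - t))⁻¹) := by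
    have hswap : (∑ r, (∑ i ∈ I, Phi p k r i) * (starRingEnd ℂ) (∑ j ∈ J, Phi p k r j))
        = ∑ s ∈ I, ∑ t ∈ J, ∑ r, Phi p k r s * (starRingEnd ℂ) (Phi p k r t) := by
      simp_rw [map_sum, Finset.sum_mul, Finset.mul_sum]
      rw [Finset.sum_comm]
      exact Finset.sum_congr rfl fun s _ => Finset.sum_comm
    have hpair : ∀ s ∈ I, ∀ t ∈ J, (∑ r, Phi p k r s * (starRingEnd ℂ) (Phi p k r t))
        = (1 / (p : ℂ)) * ∑ j ∈ Finset.Ico 1 k,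
            gaussSum (χ₀ ^ j) (psiA p) * ((χ₀ ^ j) (s - t))⁻¹ := by
      intro s hs t ht
      have hst : s - t ≠ 0 := sub_ne_zero.mpr (fun h => (Finset.disjoint_left.mp hIJ hs) (h ▸ ht))
      rw [← hentry (s - t) hst]
      rw [Fintype.sum_option]
      congr 1
      · show ((1 / Real.sqrt p : ℝ) : ℂ) * (starRingEnd ℂ) ((1 / Real.sqrt p : ℝ) : ℂ)
            = 1 / (p : ℂ)
        rw [Complex.conj_ofReal, ← Complex.ofReal_mul,
          show (1 / Real.sqrt p) * (1 / Real.sqrt p) = 1 / (p : ℝ) by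
            rw [div_mul_div_comm, one_mul, Real.mul_self_sqrt hp0R.le]]
        push_cast
        ring
      · rw [Finset.mul_sum]
        refine Finset.sum_congr rfl fun b _ => ?_
        show ((Real.sqrt ((k : ℝ) / (p : ℝ)) : ℝ) : ℂ) * psi p (b.1 * s) *
            (starRingEnd ℂ) (((Real.sqrt ((k : ℝ) / (p : ℝ)) : ℝ) : ℂ) * psi p (b.1 * t))
            = (k : ℂ) / (p : ℂ) * psi p (b.1 * (s - t))
        rw [map_mul, Complex.conj_ofReal, conj_psi, mul_mul_mul_comm]
        have h1 : psi p (b.1 * s) * psi p (-(b.1 * t)) = psi p (b.1 * (s - t)) := by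
          rw [← psiA_apply, ← psiA_apply, ← psiA_apply, ← AddChar.map_add_eq_mul]
          congr 1
          ring
        have h2 : ((Real.sqrt ((k : ℝ) / (p : ℝ)) : ℝ) : ℂ) *
            ((Real.sqrt ((k : ℝ) / (p : ℝ)) : ℝ) : ℂ) = (k : ℂ) / (p : ℂ) := by
          rw [← Complex.ofReal_mul, Real.mul_self_sqrt (by positivity)]
          push_cast
          ring
        rw [h1, h2]
    calc (∑ r, (∑ i ∈ I, Phi p k r i) * (starRingEnd ℂ) (∑ j ∈ J, Phi p k r j))
        = ∑ s ∈ I, ∑ t ∈ J, (1 / (p : ℂ)) * ∑ j ∈ Finset.Ico 1 k,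
            gaussSum (χ₀ ^ j) (psiA p) * ((χ₀ ^ j) (s - t))⁻¹ := by
          rw [hswap]
          exact Finset.sum_congr rfl fun s hs => Finset.sum_congr rfl fun t ht => hpair s hs t ht
      _ = (1 / (p : ℂ)) * ∑ s ∈ I, ∑ t ∈ J, ∑ j ∈ Finset.Ico 1 k,
            gaussSum (χ₀ ^ j) (psiA p) * ((χ₀ ^ j) (s - t))⁻¹ := by
          simp_rw [← Finset.mul_sum]
      _ = (1 / (p : ℂ)) * ∑ s ∈ I, ∑ j ∈ Finset.Ico 1 k, ∑ t ∈ J,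
            gaussSum (χ₀ ^ j) (psiA p) * ((χ₀ ^ j) (s - t))⁻¹ := by
          congr 1
          exact Finset.sum_congr rfl fun s _ => Finset.sum_comm
      _ = (1 / (p : ℂ)) * ∑ j ∈ Finset.Ico 1 k, ∑ s ∈ I, ∑ t ∈ J,
            gaussSum (χ₀ ^ j) (psiA p) * ((χ₀ ^ j) (s - t))⁻¹ := by
          congr 1
          exact Finset.sum_comm
      _ = (1 / (p : ℂ)) * ∑ j ∈ Finset.Ico 1 k,
            gaussSum (χ₀ ^ j) (psiA p) * (∑ s ∈ I, ∑ t ∈ J, ((χ₀ ^ j) (s - t))⁻¹) := by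
          congr 1
          exact Finset.sum_congr rfl fun j _ => by simp_rw [Finset.mul_sum]
  rw [hmain, norm_mul]
  have habs1 : ‖1 / (p : ℂ)‖ = 1 / (p : ℝ) := by
    rw [norm_div, norm_one, Complex.norm_natCast]
  rw [habs1]
  have hne1 : ∀ j, 1 ≤ j → j < k → (χ₀ ^ j) ≠ (1 : MulChar (ZMod p) ℂ) := by
    intro j h1 h2
    exact pow_ne_one_of_lt_orderOf (by omega) (by rw [hχ₀ord]; exact h2)
  have hsqrtIJ : (0 : ℝ) ≤ Real.sqrt ((I.card : ℝ) * (J.card : ℝ)) := Real.sqrt_nonneg _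
  have hWb : ∀ j ∈ Finset.Ico 1 k,
      ‖∑ s ∈ I, ∑ t ∈ J, ((χ₀ ^ j) (s - t))⁻¹‖
        ≤ (p : ℝ) ^ τ * Real.sqrt ((I.card : ℝ) * (J.card : ℝ)) := by
    intro j hj
    rw [Finset.mem_Ico] at hj
    have hinv_ne : ((χ₀ ^ j)⁻¹ : MulChar (ZMod p) ℂ) ≠ 1 := fun h =>
      (hne1 j hj.1 hj.2) (by rwa [inv_eq_one] at h)
    have hNT := isNontriv hinv_ne
    have heq : (∑ s ∈ I, ∑ t ∈ J, ((χ₀ ^ j) (s - t))⁻¹)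
        = ∑ s ∈ I, ∑ t ∈ J, ((χ₀ ^ j)⁻¹ : MulChar (ZMod p) ℂ) (s - t) := by
      refine Finset.sum_congr rfl fun s _ => Finset.sum_congr rfl fun t _ => ?_
      rw [MulChar.inv_apply_eq_inv']
    rw [heq]
    by_cases hcase : ((p : ℝ) ^ α < (I.card : ℝ)) ∧ ((p : ℝ) ^ α < (J.card : ℝ))
    · have hb := hP _ hNT I J hcase.1 hcase.2
      have h1 : Real.sqrt ((I.card : ℝ) * (J.card : ℝ)) ≤ (p : ℝ) ^ (τ + β₀) := by
        rw [show (p : ℝ) ^ (τ + β₀) = Real.sqrt ((p : ℝ) ^ (τ + β₀) * (p : ℝ) ^ (τ + β₀)) from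
          (Real.sqrt_mul_self (by positivity)).symm]
        exact Real.sqrt_le_sqrt (mul_le_mul hI hJ (Nat.cast_nonneg _) (by positivity))
      calc ‖∑ s ∈ I, ∑ t ∈ J, ((χ₀ ^ j)⁻¹ : MulChar (ZMod p) ℂ) (s - t)‖
          ≤ (p : ℝ) ^ (-β₀) * (I.card : ℝ) * (J.card : ℝ) := hb
        _ = (p : ℝ) ^ (-β₀) * (Real.sqrt ((I.card : ℝ) * (J.card : ℝ)) *
              Real.sqrt ((I.card : ℝ) * (J.card : ℝ))) := by
            rw [Real.mul_self_sqrt (by positivity), mul_assoc]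
        _ ≤ (p : ℝ) ^ (-β₀) * ((p : ℝ) ^ (τ + β₀) *
              Real.sqrt ((I.card : ℝ) * (J.card : ℝ))) := by
            refine mul_le_mul_of_nonneg_left ?_ (by positivity)
            exact mul_le_mul_of_nonneg_right h1 hsqrtIJ
        _ = (p : ℝ) ^ τ * Real.sqrt ((I.card : ℝ) * (J.card : ℝ)) := by
            rw [← mul_assoc, ← Real.rpow_add hp0R]
            norm_num
    · have hb := trivial_bound hNT.1 I J
      have h2 : Real.sqrt ((I.card : ℝ) * (J.card : ℝ)) ≤ (p : ℝ) ^ τ := by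
        have hprod : (I.card : ℝ) * (J.card : ℝ) ≤ (p : ℝ) ^ α * (p : ℝ) ^ (τ + β₀) := by
          rcases not_and_or.mp hcase with h | h
          · push_neg at h
            exact mul_le_mul h hJ (Nat.cast_nonneg _) (by positivity)
          · push_neg at h
            rw [mul_comm ((p : ℝ) ^ α) _]
            exact mul_le_mul hI h (Nat.cast_nonneg _) (by positivity)
        calc Real.sqrt ((I.card : ℝ) * (J.card : ℝ))
            ≤ Real.sqrt ((p : ℝ) ^ α * (p : ℝ) ^ (τ + β₀)) := Real.sqrt_le_sqrt hprod
          _ = (p : ℝ) ^ ((α + (τ + β₀)) / 2) := by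
              rw [← Real.rpow_add hp0R, Real.sqrt_eq_rpow, ← Real.rpow_mul hp0R.le]
              congr 1
              ring
          _ ≤ (p : ℝ) ^ τ := Real.rpow_le_rpow_of_exponent_le hp1R.le (by linarith)
      calc ‖∑ s ∈ I, ∑ t ∈ J, ((χ₀ ^ j)⁻¹ : MulChar (ZMod p) ℂ) (s - t)‖
          ≤ (I.card : ℝ) * (J.card : ℝ) := hb
        _ = Real.sqrt ((I.card : ℝ) * (J.card : ℝ)) *
              Real.sqrt ((I.card : ℝ) * (J.card : ℝ)) :=
            (Real.mul_self_sqrt (by positivity)).symm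
        _ ≤ (p : ℝ) ^ τ * Real.sqrt ((I.card : ℝ) * (J.card : ℝ)) :=
            mul_le_mul_of_nonneg_right h2 hsqrtIJ
  have hGb : ∀ j ∈ Finset.Ico 1 k,
      ‖gaussSum (χ₀ ^ j) (psiA p)‖ = Real.sqrt p := by
    intro j hj
    rw [Finset.mem_Ico] at hj
    exact gauss_abs (hne1 j hj.1 hj.2)
  have key2 : (1 / (p : ℝ)) * (Real.sqrt p * (p : ℝ) ^ τ) = (p : ℝ) ^ (τ - 1 / 2) := by
    have e1 : (1 / (p : ℝ)) = (p : ℝ) ^ (-(1 : ℝ)) := by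
      rw [Real.rpow_neg hp0R.le, Real.rpow_one, one_div]
    rw [Real.sqrt_eq_rpow, e1, ← Real.rpow_add hp0R, ← Real.rpow_add hp0R]
    congr 1
    ring
  calc (1 / (p : ℝ)) * ‖∑ j ∈ Finset.Ico 1 k,
        gaussSum (χ₀ ^ j) (psiA p) * (∑ s ∈ I, ∑ t ∈ J, ((χ₀ ^ j) (s - t))⁻¹)‖
      ≤ (1 / (p : ℝ)) * ∑ j ∈ Finset.Ico 1 k, ‖gaussSum (χ₀ ^ j) (psiA p) *
          (∑ s ∈ I, ∑ t ∈ J, ((χ₀ ^ j) (s - t))⁻¹)‖ :=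
        mul_le_mul_of_nonneg_left (norm_sum_le _ _) (by positivity)
    _ ≤ (1 / (p : ℝ)) * ∑ j ∈ Finset.Ico 1 k, Real.sqrt p *
          ((p : ℝ) ^ τ * Real.sqrt ((I.card : ℝ) * (J.card : ℝ))) := by
        refine mul_le_mul_of_nonneg_left (Finset.sum_le_sum fun j hj => ?_) (by positivity)
        rw [norm_mul, hGb j hj]
        exact mul_le_mul_of_nonneg_left (hWb j hj) (Real.sqrt_nonneg _)
    _ = (1 / (p : ℝ)) * (((k : ℝ) - 1) * (Real.sqrt p *
          ((p : ℝ) ^ τ * Real.sqrt ((I.card : ℝ) * (J.card : ℝ))))) := by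
        rw [Finset.sum_const, Nat.card_Ico, nsmul_eq_mul]
        congr 2
        rw [Nat.cast_sub (by omega)]
        norm_num
    _ = ((k : ℝ) - 1) * (p : ℝ) ^ (τ - 1 / 2) *
          Real.sqrt ((I.card : ℝ) * (J.card : ℝ)) := by
        rw [← key2]
        ring
end

section
/- Let Φ be an M × N complex matrix each of whose columns has ℓ₂-norm 1, and let K ≤ M ≤ N and θ > 0. If Φ has the (K, θ)-flat restricted isometry property, then Φ has the (K, 150·θ·log K)-restricted isometry property. -/
/-- The `(K, θ)`-flat restricted isometry property: for all disjoint index sets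
`I, J` of size at most `K`, `|⟨Σ_{i∈I} ψ_i, Σ_{j∈J} ψ_j⟩| ≤ θ·√(|I|·|J|)`,
where the `ψ_i` are the columns of `Φ`. -/
def HasFlatRIP {m n : Type*} [Fintype m] [Fintype n]
    (Φ : Matrix m n ℂ) (K : ℕ) (θ : ℝ) : Prop :=
  ∀ I J : Finset n, Disjoint I J → I.card ≤ K → J.card ≤ K →
    ‖∑ l, (∑ i ∈ I, Φ l i) * (starRingEnd ℂ) (∑ j ∈ J, Φ l j)‖ ≤
      θ * Real.sqrt ((I.card : ℝ) * (J.card : ℝ))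

/-- The `(K, δ)`-restricted isometry property:
`(1−δ)‖x‖² ≤ ‖Φx‖² ≤ (1+δ)‖x‖²` for every vector `x` with at most `K` nonzero entries. -/
def HasRIP {m n : Type*} [Fintype m] [Fintype n]
    (Φ : Matrix m n ℂ) (K : ℕ) (δ : ℝ) : Prop :=
  ∀ x : n → ℂ, Set.ncard {j | x j ≠ 0} ≤ K →
    (1 - δ) * ∑ j, ‖x j‖ ^ 2 ≤ ∑ i, ‖∑ j, Φ i j * x j‖ ^ 2 ∧
    ∑ i, ‖∑ j, Φ i j * x j‖ ^ 2 ≤ (1 + δ) * ∑ j, ‖x j‖ ^ 2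

open Finset

noncomputable def harm (K : ℕ) : ℝ := ∑ k ∈ Finset.range K, 1/(k+1)

lemma harm_nonneg (K : ℕ) : 0 ≤ harm K := by
  apply Finset.sum_nonneg; intro k _; positivity

lemma harm_le (K : ℕ) (hK : 1 ≤ K) : harm K ≤ 1 + Real.log K := by
  induction K with
  | zero => omega
  | succ K ih =>
    rcases Nat.eq_or_lt_of_le hK with h | h
    · simp [harm, ← h]
    · have hK1 : 1 ≤ K := by omega
      have hKpos : (0:ℝ) < K := by positivity
      have h1 : Real.log ((K:ℝ)/(K+1)) ≤ (K:ℝ)/(K+1) - 1 := by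
        apply Real.log_le_sub_one_of_pos; positivity
      have h2 : Real.log ((K:ℝ)/(K+1)) = Real.log K - Real.log (K+1) := by
        rw [Real.log_div (by positivity) (by positivity)]
      have h3 : (K:ℝ)/(K+1) - 1 = -(1/(K+1)) := by field_simp; ring
      have h4 : (1:ℝ)/(K+1) ≤ Real.log (K+1) - Real.log K := by
        rw [h2, h3] at h1; linarith
      have := ih hK1
      have : harm (K+1) = harm K + 1/(K+1) := by
        simp [harm, Finset.sum_range_succ]
      push_cast
      linarith

lemma abel_id {M : Type*} [Field M] (c : ℕ → M) (t : ℕ → M) (s : ℕ) :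
    ∑ k ∈ range s, (c k - c (k+1)) * (∑ j ∈ range (k+1), t j)
      = (∑ k ∈ range s, c k * t k) - c s * (∑ j ∈ range s, t j) := by
  induction s with
  | zero => simp
  | succ s ih =>
    rw [Finset.sum_range_succ, ih, Finset.sum_range_succ (f := fun k => c k * t k),
      Finset.sum_range_succ (f := t)]
    ring

lemma sqrt_succ_sub (k : ℕ) :
    Real.sqrt (k+1) - Real.sqrt k ≤ 1 / Real.sqrt (k+1) := by
  have hb : (0:ℝ) < Real.sqrt (k+1) := Real.sqrt_pos.mpr (by positivity)
  rw [sub_le_iff_le_add, div_add' _ _ _ hb.ne', le_div_iff₀ hb]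
  have h1 : Real.sqrt k * Real.sqrt k = (k:ℝ) := Real.mul_self_sqrt (by positivity)
  have h2 : Real.sqrt (k+1) * Real.sqrt (k+1) = ((k:ℝ)+1) := Real.mul_self_sqrt (by positivity)
  have h3 : Real.sqrt k * Real.sqrt k ≤ Real.sqrt k * Real.sqrt (k+1) := by
    apply mul_le_mul_of_nonneg_left _ (Real.sqrt_nonneg _)
    exact Real.sqrt_le_sqrt (by push_cast; linarith)
  nlinarith [Real.sqrt_nonneg (k:ℝ)]

lemma lemA {n : Type*} [Fintype n] [DecidableEq n] (w : n → ℝ) (t : n → ℂ)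
    (c : ℝ) (hc : 0 ≤ c) (S : Finset n) (K : ℕ) (hSK : S.card ≤ K)
    (hw : ∀ i, 0 ≤ w i) (hsupp : ∀ i, w i ≠ 0 → i ∈ S)
    (ht : ∀ I, I ⊆ S → ‖∑ i ∈ I, t i‖ ≤ c * Real.sqrt I.card) :
    ‖∑ i, (w i : ℂ) * t i‖ ≤
      c * Real.sqrt (harm K) * Real.sqrt (∑ i, w i ^ 2) := by
  have hRHS : 0 ≤ c * Real.sqrt (harm K) * Real.sqrt (∑ i, w i ^ 2) := by positivity
  set s := S.card with hs
  rcases Nat.eq_zero_or_pos s with hs0 | hspos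
  · have hSempty : S = ∅ := Finset.card_eq_zero.mp hs0
    have hw0 : ∀ i, w i = 0 := by
      intro i; by_contra h
      have := hsupp i h; rw [hSempty] at this; exact absurd this (Finset.notMem_empty i)
    have hz : (∑ i, (w i : ℂ) * t i) = 0 := by simp [hw0]
    rw [hz]; simpa using hRHS
  · -- main case
    obtain ⟨i₀, hi₀⟩ := Finset.card_pos.mp hspos
    set E := S.equivFin with hE
    set f : Fin s → ℝ := fun k => -(w ((E.symm k) : n)) with hf
    set σ := Tuple.sort f with hσ
    set e : Fin s → n := fun k => ((E.symm (σ k)) : n) with he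
    have he_inj : Function.Injective e := by
      intro a b hab
      apply σ.injective
      apply E.symm.injective
      exact Subtype.ext hab
    have heS : ∀ k, e k ∈ S := fun k => (E.symm (σ k)).2
    have hsorted : ∀ j k : Fin s, j ≤ k → w (e k) ≤ w (e j) := by
      intro j k hjk
      have := Tuple.monotone_sort f hjk
      simp only [Function.comp_apply, hf] at this
      simpa [he] using this
    have hesurj : ∀ i ∈ S, ∃ k, e k = i := by
      intro i hi
      exact ⟨σ.symm (E ⟨i, hi⟩), by simp [he]⟩
    set e' : ℕ → n := fun j => if h : j < s then e ⟨j, h⟩ else i₀ with he'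
    set c' : ℕ → ℝ := fun j => if h : j < s then w (e ⟨j,h⟩) else 0 with hc'
    set t' : ℕ → ℂ := fun j => t (e' j) with ht'
    have hc'0 : ∀ j, 0 ≤ c' j := by
      intro j; simp only [hc']; split <;> simp [hw]
    have hc's : c' s = 0 := by simp [hc']
    have hmono : ∀ k, c' (k+1) ≤ c' k := by
      intro k
      by_cases h : k + 1 < s
      · have hk : k < s := by omega
        simp only [hc', dif_pos h, dif_pos hk]
        exact hsorted ⟨k, hk⟩ ⟨k+1, h⟩ (by simp)
      · simp only [hc', dif_neg h]
        split <;> simp [hw]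
    -- Step 1: rewrite the sum
    have step1 : ∑ i, (w i : ℂ) * t i = ∑ k ∈ range s, (c' k : ℂ) * t' k := by
      rw [← Finset.sum_subset S.subset_univ (by
        intro i _ hiS
        have : w i = 0 := by by_contra h; exact hiS (hsupp i h)
        simp [this])]
      rw [Finset.sum_bij (i := fun (k : Fin s) _ => e k) (fun k _ => heS k)
        (fun a _ b _ hab => he_inj hab)
        (fun b hb => by obtain ⟨k, hk⟩ := hesurj b hb; exact ⟨k, Finset.mem_univ k, hk⟩)
        (fun k _ => rfl) |>.symm]
      rw [← Fin.sum_univ_eq_sum_range (fun j => (c' j : ℂ) * t' j) s]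
      apply Finset.sum_congr rfl
      intro k _
      simp only [hc', ht', he', dif_pos k.isLt]
    -- the level sets
    have hDk : ∀ k, k < s → ∃ D : Finset n, D ⊆ S ∧ D.card = k + 1 ∧
        (∑ j ∈ range (k+1), t' j) = ∑ i ∈ D, t i := by
      intro k hk
      refine ⟨(range (k+1)).image e', ?_, ?_, ?_⟩
      · intro i hi
        obtain ⟨j, hj, rfl⟩ := Finset.mem_image.mp hi
        have hjs : j < s := by simp at hj; omega
        simp only [he', dif_pos hjs]
        exact heS _
      · rw [Finset.card_image_of_injOn, Finset.card_range]
        intro a ha b hb hab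
        simp only [Finset.mem_coe, Finset.mem_range] at ha hb
        have has : a < s := by omega
        have hbs : b < s := by omega
        simp only [he', dif_pos has, dif_pos hbs] at hab
        have := he_inj hab
        exact Fin.mk.inj_iff.mp this
      · rw [Finset.sum_image]
        intro a ha b hb hab
        simp only [Finset.mem_coe, Finset.mem_range] at ha hb
        have has : a < s := by omega
        have hbs : b < s := by omega
        simp only [he', dif_pos has, dif_pos hbs] at hab
        exact Fin.mk.inj_iff.mp (he_inj hab)
    -- Step 2-4: Abel + bound
    have step2 : ‖∑ i, (w i : ℂ) * t i‖ ≤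
        c * ∑ k ∈ range s, (c' k - c' (k+1)) * Real.sqrt (k+1) := by
      rw [step1]
      have habel := abel_id (fun k => (c' k : ℂ)) t' s
      simp only [hc's, Complex.ofReal_zero, zero_mul, sub_zero] at habel
      rw [← habel]
      calc ‖∑ k ∈ range s, ((c' k : ℂ) - (c' (k+1) : ℂ)) * ∑ j ∈ range (k+1), t' j‖
          ≤ ∑ k ∈ range s, ‖((c' k : ℂ) - (c' (k+1) : ℂ)) * ∑ j ∈ range (k+1), t' j‖ :=
            norm_sum_le _ _
        _ ≤ ∑ k ∈ range s, (c' k - c' (k+1)) * (c * Real.sqrt (k+1)) := by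
            apply Finset.sum_le_sum
            intro k hk
            have hks : k < s := Finset.mem_range.mp hk
            obtain ⟨D, hDS, hDcard, hDsum⟩ := hDk k hks
            rw [norm_mul, ← Complex.ofReal_sub, Complex.norm_real, Real.norm_eq_abs,
              abs_of_nonneg (by linarith [hmono k]), hDsum]
            apply mul_le_mul_of_nonneg_left _ (by linarith [hmono k])
            have := ht D hDS
            rw [hDcard] at this
            simpa using this
        _ = c * ∑ k ∈ range s, (c' k - c' (k+1)) * Real.sqrt (k+1) := by
            rw [Finset.mul_sum]; apply Finset.sum_congr rfl; intros; ring
    -- Step 6: Abel back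
    have step6 : ∑ k ∈ range s, (c' k - c' (k+1)) * Real.sqrt (k+1)
        = ∑ k ∈ range s, c' k * (Real.sqrt (k+1) - Real.sqrt k) := by
      have habel := abel_id c' (fun j => Real.sqrt (j+1) - Real.sqrt j) s
      have htel : ∀ k : ℕ, ∑ j ∈ range k, (Real.sqrt (j+1) - Real.sqrt j) = Real.sqrt k := by
        intro k
        induction k with
        | zero => simp
        | succ k ih =>
          rw [Finset.sum_range_succ, ih]
          push_cast
          ring
      simp only [htel, hc's, zero_mul, sub_zero] at habel
      push_cast at habel ⊢
      rw [habel]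
    -- Step 7+8
    have step7 : ∑ k ∈ range s, c' k * (Real.sqrt (k+1) - Real.sqrt k)
        ≤ ∑ k ∈ range s, c' k * (1 / Real.sqrt (k+1)) := by
      apply Finset.sum_le_sum
      intro k _
      exact mul_le_mul_of_nonneg_left (sqrt_succ_sub k) (hc'0 k)
    have step8 : ∑ k ∈ range s, c' k * (1 / Real.sqrt (k+1))
        ≤ Real.sqrt (harm K) * Real.sqrt (∑ i, w i ^ 2) := by
      have hCS := Finset.sum_mul_sq_le_sq_mul_sq (range s) c' (fun k => 1 / Real.sqrt (k+1))
      have hA : ∑ k ∈ range s, c' k ^ 2 ≤ ∑ i, w i ^ 2 := by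
        have : ∑ k ∈ range s, c' k ^ 2 = ∑ k : Fin s, w (e k) ^ 2 := by
          rw [← Fin.sum_univ_eq_sum_range (fun j => c' j ^ 2) s]
          apply Finset.sum_congr rfl
          intro k _
          simp [hc', dif_pos k.isLt]
        rw [this]
        have h2 : ∑ k : Fin s, w (e k) ^ 2 = ∑ i ∈ S, w i ^ 2 :=
          Finset.sum_bij (i := fun (k : Fin s) _ => e k) (fun k _ => heS k)
            (fun a _ b _ hab => he_inj hab)
            (fun b hb => by obtain ⟨k, hk⟩ := hesurj b hb; exact ⟨k, Finset.mem_univ k, hk⟩)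
            (fun k _ => rfl)
        rw [h2]
        exact Finset.sum_le_sum_of_subset_of_nonneg S.subset_univ
          (fun i _ _ => sq_nonneg _)
      have hB : ∑ k ∈ range s, (1 / Real.sqrt (k+1)) ^ 2 ≤ harm K := by
        have heq : ∀ k : ℕ, (1 / Real.sqrt (k+1)) ^ 2 = 1 / ((k:ℝ)+1) := by
          intro k
          rw [div_pow, one_pow, Real.sq_sqrt (by positivity)]
        simp only [heq]
        unfold harm
        apply Finset.sum_le_sum_of_subset_of_nonneg
        · exact Finset.range_subset_range.mpr hSK
        · intro k _ _; positivity
      have hsum_nonneg : 0 ≤ ∑ k ∈ range s, c' k * (1 / Real.sqrt (k+1)) := by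
        apply Finset.sum_nonneg; intro k _
        apply mul_nonneg (hc'0 k); positivity
      have h1 : (∑ k ∈ range s, c' k * (1 / Real.sqrt (k+1)))^2 ≤ (∑ i, w i ^ 2) * harm K := by
        calc (∑ k ∈ range s, c' k * (1 / Real.sqrt (k+1)))^2
            ≤ (∑ k ∈ range s, c' k ^ 2) * ∑ k ∈ range s, (1 / Real.sqrt (k+1)) ^ 2 := hCS
          _ ≤ (∑ i, w i ^ 2) * harm K := by
              apply mul_le_mul hA hB (Finset.sum_nonneg (fun k _ => by positivity))
              exact Finset.sum_nonneg (fun i _ => sq_nonneg _)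
      calc ∑ k ∈ range s, c' k * (1 / Real.sqrt (k+1))
          ≤ Real.sqrt ((∑ i, w i ^ 2) * harm K) := by
            rw [← Real.sqrt_sq hsum_nonneg]
            exact Real.sqrt_le_sqrt h1
        _ = Real.sqrt (harm K) * Real.sqrt (∑ i, w i ^ 2) := by
            rw [Real.sqrt_mul (Finset.sum_nonneg (fun i _ => sq_nonneg _)), mul_comm]
    calc ‖∑ i, (w i : ℂ) * t i‖
        ≤ c * ∑ k ∈ range s, (c' k - c' (k+1)) * Real.sqrt (k+1) := step2
      _ = c * ∑ k ∈ range s, c' k * (Real.sqrt (k+1) - Real.sqrt k) := by rw [step6]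
      _ ≤ c * (Real.sqrt (harm K) * Real.sqrt (∑ i, w i ^ 2)) := by
          apply mul_le_mul_of_nonneg_left _ hc
          exact le_trans step7 step8
      _ = c * Real.sqrt (harm K) * Real.sqrt (∑ i, w i ^ 2) := by ring

noncomputable def gram {m n : Type*} [Fintype m] (Φ : Matrix m n ℂ) (p q : n) : ℂ :=
  ∑ l, Φ l p * (starRingEnd ℂ) (Φ l q)

lemma flat_double {m n : Type*} [Fintype m] [Fintype n] (Φ : Matrix m n ℂ) (I J : Finset n) :
    ∑ p ∈ I, ∑ q ∈ J, gram Φ p q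
      = ∑ l, (∑ i ∈ I, Φ l i) * (starRingEnd ℂ) (∑ j ∈ J, Φ l j) := by
  simp only [map_sum, Finset.sum_mul_sum, gram]
  calc ∑ p ∈ I, ∑ q ∈ J, ∑ l, Φ l p * (starRingEnd ℂ) (Φ l q)
      = ∑ p ∈ I, ∑ l, ∑ q ∈ J, Φ l p * (starRingEnd ℂ) (Φ l q) := by
        exact Finset.sum_congr rfl (fun p _ => Finset.sum_comm)
    _ = ∑ l, ∑ p ∈ I, ∑ q ∈ J, Φ l p * (starRingEnd ℂ) (Φ l q) := Finset.sum_comm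

lemma lemB {m n : Type*} [Fintype m] [Fintype n] [DecidableEq n]
    (Φ : Matrix m n ℂ) (K : ℕ) (θ : ℝ)
    (hθ : 0 ≤ θ) (hflat : HasFlatRIP Φ K θ)
    (u v : n → ℝ) (hu : ∀ i, 0 ≤ u i) (hv : ∀ i, 0 ≤ v i)
    (I₀ J₀ : Finset n) (hd : Disjoint I₀ J₀) (hI : I₀.card ≤ K) (hJ : J₀.card ≤ K)
    (hus : ∀ i, u i ≠ 0 → i ∈ I₀) (hvs : ∀ i, v i ≠ 0 → i ∈ J₀) :
    ‖∑ p, (u p : ℂ) * ∑ q, (v q : ℂ) * gram Φ p q‖ ≤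
      θ * harm K * Real.sqrt (∑ i, u i ^ 2) * Real.sqrt (∑ i, v i ^ 2) := by
  have hinner : ∀ I : Finset n, I ⊆ I₀ →
      ‖∑ q, (v q : ℂ) * (∑ p ∈ I, gram Φ p q)‖ ≤
      (θ * Real.sqrt I.card) * Real.sqrt (harm K) * Real.sqrt (∑ i, v i ^ 2) := by
    intro I hI'
    apply lemA v _ _ (by positivity) J₀ K hJ hv hvs
    intro J hJ'
    have hd' : Disjoint I J := Disjoint.mono hI' hJ' hd
    have hb := hflat I J hd' (le_trans (Finset.card_le_card hI') hI)
      (le_trans (Finset.card_le_card hJ') hJ)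
    rw [← flat_double] at hb
    have hswap : ∑ q ∈ J, ∑ p ∈ I, gram Φ p q = ∑ p ∈ I, ∑ q ∈ J, gram Φ p q :=
      Finset.sum_comm
    rw [hswap]
    calc ‖∑ p ∈ I, ∑ q ∈ J, gram Φ p q‖
        ≤ θ * Real.sqrt ((I.card : ℝ) * (J.card : ℝ)) := hb
      _ = θ * Real.sqrt I.card * Real.sqrt J.card := by
          rw [Real.sqrt_mul (by positivity)]; ring
  have houter := lemA u (fun p => ∑ q, (v q : ℂ) * gram Φ p q)
    (θ * Real.sqrt (harm K) * Real.sqrt (∑ i, v i ^ 2)) (by positivity) I₀ K hI hu hus ?_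
  · have hH := Real.mul_self_sqrt (harm_nonneg K)
    calc ‖∑ p, (u p : ℂ) * ∑ q, (v q : ℂ) * gram Φ p q‖
        ≤ θ * Real.sqrt (harm K) * Real.sqrt (∑ i, v i ^ 2) * Real.sqrt (harm K)
            * Real.sqrt (∑ i, u i ^ 2) := houter
      _ = θ * (Real.sqrt (harm K) * Real.sqrt (harm K)) * Real.sqrt (∑ i, u i ^ 2)
            * Real.sqrt (∑ i, v i ^ 2) := by ring
      _ = θ * harm K * Real.sqrt (∑ i, u i ^ 2) * Real.sqrt (∑ i, v i ^ 2) := by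
          rw [hH]
  · intro I hI'
    have hswap : ∑ p ∈ I, ∑ q, (v q : ℂ) * gram Φ p q
        = ∑ q, (v q : ℂ) * (∑ p ∈ I, gram Φ p q) := by
      rw [Finset.sum_comm]
      apply Finset.sum_congr rfl; intro q _
      rw [Finset.mul_sum]
    rw [hswap]
    calc ‖∑ q, (v q : ℂ) * (∑ p ∈ I, gram Φ p q)‖
        ≤ (θ * Real.sqrt I.card) * Real.sqrt (harm K) * Real.sqrt (∑ i, v i ^ 2) :=
          hinner I hI'
      _ = θ * Real.sqrt (harm K) * Real.sqrt (∑ i, v i ^ 2) * Real.sqrt I.card := by ring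

lemma count_subsets {n : Type*} [DecidableEq n] (S : Finset n) (p q : n)
    (hp : p ∈ S) (hq : q ∈ S) (hpq : p ≠ q) :
    (S.powerset.filter (fun T => p ∈ T ∧ q ∉ T)).card = 2 ^ (S.card - 2) := by
  have h := Finset.card_bij' (s := S.powerset.filter (fun T => p ∈ T ∧ q ∉ T))
    (t := ((S.erase p).erase q).powerset)
    (i := fun T _ => T.erase p) (j := fun T' _ => insert p T')
    (hi := by
      intro T hT
      simp only [Finset.mem_filter, Finset.mem_powerset] at hT ⊢
      obtain ⟨hTS, hpT, hqT⟩ := hT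
      intro x hx
      rw [Finset.mem_erase] at hx
      rw [Finset.mem_erase, Finset.mem_erase]
      exact ⟨fun hxq => hqT (hxq ▸ hx.2), hx.1, hTS hx.2⟩)
    (hj := by
      intro T' hT'
      simp only [Finset.mem_powerset] at hT'
      simp only [Finset.mem_filter, Finset.mem_powerset]
      refine ⟨?_, Finset.mem_insert_self p T', ?_⟩
      · intro x hx
        rcases Finset.mem_insert.mp hx with rfl | hx'
        · exact hp
        · have := hT' hx'
          rw [Finset.mem_erase, Finset.mem_erase] at this
          exact this.2.2
      · intro hqmem
        rcases Finset.mem_insert.mp hqmem with rfl | hq'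
        · exact hpq rfl
        · have := hT' hq'
          rw [Finset.mem_erase] at this
          exact this.1 rfl)
    (left_inv := by
      intro T hT
      simp only [Finset.mem_filter] at hT
      exact Finset.insert_erase hT.2.1)
    (right_inv := by
      intro T' hT'
      simp only [Finset.mem_powerset] at hT'
      apply Finset.erase_insert
      intro hpT'
      have := hT' hpT'
      rw [Finset.mem_erase, Finset.mem_erase] at this
      exact this.2.1 rfl)
  have hq' : q ∈ S.erase p := Finset.mem_erase.mpr ⟨hpq.symm, hq⟩
  rw [h, Finset.card_powerset, Finset.card_erase_of_mem hq', Finset.card_erase_of_mem hp]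
  congr 1

lemma averaging {n : Type*} [Fintype n] [DecidableEq n] (S : Finset n) (F : n → n → ℂ) :
    ∑ T ∈ S.powerset, (∑ p ∈ T, ∑ q ∈ S \ T, F p q)
      = (2 ^ (S.card - 2) : ℂ) * ∑ p ∈ S, ∑ q ∈ S.erase p, F p q := by
  have h1 : ∀ T ∈ S.powerset, (∑ p ∈ T, ∑ q ∈ S \ T, F p q)
      = ∑ p ∈ S, ∑ q ∈ S, if p ∈ T ∧ q ∉ T then F p q else 0 := by
    intro T hT
    rw [Finset.mem_powerset] at hT
    have hTeq : T = S.filter (· ∈ T) := by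
      rw [Finset.filter_mem_eq_inter, Finset.inter_eq_right.mpr hT]
    have hSdiff : S \ T = S.filter (· ∉ T) := Finset.sdiff_eq_filter S T
    calc ∑ p ∈ T, ∑ q ∈ S \ T, F p q
        = ∑ p ∈ S.filter (· ∈ T), ∑ q ∈ S.filter (· ∉ T), F p q := by
          rw [← hTeq, ← hSdiff]
      _ = ∑ p ∈ S, if p ∈ T then (∑ q ∈ S, if q ∉ T then F p q else 0) else 0 := by
          rw [Finset.sum_filter]
          apply Finset.sum_congr rfl; intro p _
          by_cases h : p ∈ T
          · rw [if_pos h, if_pos h, Finset.sum_filter]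
          · rw [if_neg h, if_neg h]
      _ = ∑ p ∈ S, ∑ q ∈ S, if p ∈ T ∧ q ∉ T then F p q else 0 := by
          apply Finset.sum_congr rfl; intro p _
          by_cases h : p ∈ T
          · rw [if_pos h]
            apply Finset.sum_congr rfl; intro q _
            simp [h]
          · rw [if_neg h, Finset.sum_eq_zero]
            intro q _
            simp [h]
  rw [Finset.sum_congr rfl h1]
  rw [Finset.sum_comm]
  have h2 : ∀ p ∈ S, ∑ T ∈ S.powerset, ∑ q ∈ S, (if p ∈ T ∧ q ∉ T then F p q else 0)
      = (2 ^ (S.card - 2) : ℂ) * ∑ q ∈ S.erase p, F p q := by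
    intro p hp
    rw [Finset.sum_comm]
    have h3 : ∀ q ∈ S, ∑ T ∈ S.powerset, (if p ∈ T ∧ q ∉ T then F p q else 0)
        = ((S.powerset.filter (fun T => p ∈ T ∧ q ∉ T)).card : ℂ) * F p q := by
      intro q _
      rw [← Finset.sum_filter, Finset.sum_const, nsmul_eq_mul]
    rw [Finset.sum_congr rfl h3]
    rw [← Finset.sum_erase_add S _ hp]
    have hdiag : ((S.powerset.filter (fun T => p ∈ T ∧ p ∉ T)).card : ℂ) * F p p = 0 := by
      have : S.powerset.filter (fun T => p ∈ T ∧ p ∉ T) = ∅ := by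
        apply Finset.filter_false_of_mem
        intro T _ h
        exact h.2 h.1
      rw [this]; simp
    rw [hdiag, add_zero, Finset.mul_sum]
    apply Finset.sum_congr rfl
    intro q hq
    rw [Finset.mem_erase] at hq
    rw [count_subsets S p q hp hq.2 (Ne.symm hq.1)]
    norm_num
  rw [Finset.sum_congr rfl h2, Finset.mul_sum]

lemma lemC {m n : Type*} [Fintype m] [Fintype n] [DecidableEq n]
    (Φ : Matrix m n ℂ) (K : ℕ) (θ : ℝ)
    (hθ : 0 ≤ θ) (hflat : HasFlatRIP Φ K θ)
    (S : Finset n) (hSK : S.card ≤ K)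
    (u v : n → ℝ) (hu : ∀ i, 0 ≤ u i) (hv : ∀ i, 0 ≤ v i)
    (hus : ∀ i, u i ≠ 0 → i ∈ S) (hvs : ∀ i, v i ≠ 0 → i ∈ S) :
    ‖∑ p ∈ S, ∑ q ∈ S.erase p, ((u p * v q : ℝ) : ℂ) * gram Φ p q‖ ≤
      4 * θ * harm K * Real.sqrt (∑ i, u i ^ 2) * Real.sqrt (∑ i, v i ^ 2) := by
  set M := θ * harm K * Real.sqrt (∑ i, u i ^ 2) * Real.sqrt (∑ i, v i ^ 2) with hM
  have hM0 : 0 ≤ M := by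
    have := harm_nonneg K
    positivity
  set F : n → n → ℂ := fun p q => ((u p * v q : ℝ) : ℂ) * gram Φ p q with hF
  -- bound each subset term
  have hT : ∀ T ∈ S.powerset, ‖∑ p ∈ T, ∑ q ∈ S \ T, F p q‖ ≤ M := by
    intro T hTmem
    rw [Finset.mem_powerset] at hTmem
    set u' : n → ℝ := fun i => if i ∈ T then u i else 0 with hu'
    set v' : n → ℝ := fun i => if i ∈ S \ T then v i else 0 with hv'
    have hrw : ∑ p ∈ T, ∑ q ∈ S \ T, F p q
        = ∑ p, (u' p : ℂ) * ∑ q, (v' q : ℂ) * gram Φ p q := by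
      rw [← Finset.sum_subset T.subset_univ (fun x _ hxT => by
        simp only [hu', if_neg hxT, Complex.ofReal_zero, zero_mul])]
      apply Finset.sum_congr rfl
      intro p hpT
      rw [← Finset.sum_subset (S \ T).subset_univ (fun x _ hx => by
        simp only [hv', if_neg hx, Complex.ofReal_zero, zero_mul, mul_zero])]
      rw [Finset.mul_sum]
      apply Finset.sum_congr rfl
      intro q hq
      simp only [hu', hv', if_pos hpT, if_pos hq, hF]
      push_cast
      ring
    rw [hrw]
    have hub := lemB Φ K θ hθ hflat u' v'
      (fun i => by simp only [hu']; split <;> simp [hu])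
      (fun i => by simp only [hv']; split <;> simp [hv])
      T (S \ T)
      (by
        rw [Finset.disjoint_left]
        intro a haT haD
        exact (Finset.mem_sdiff.mp haD).2 haT)
      (le_trans (Finset.card_le_card hTmem) hSK)
      (le_trans (Finset.card_le_card (Finset.sdiff_subset)) hSK)
      (fun i hi => by
        by_contra h
        simp only [hu', if_neg h] at hi
        exact hi rfl)
      (fun i hi => by
        by_contra h
        simp only [hv', if_neg h] at hi
        exact hi rfl)
    refine le_trans hub ?_
    rw [hM]
    have h1 : Real.sqrt (∑ i, u' i ^ 2) ≤ Real.sqrt (∑ i, u i ^ 2) := by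
      apply Real.sqrt_le_sqrt
      apply Finset.sum_le_sum
      intro i _
      simp only [hu']
      split
      · exact le_rfl
      · simpa using sq_nonneg (u i)
    have h2 : Real.sqrt (∑ i, v' i ^ 2) ≤ Real.sqrt (∑ i, v i ^ 2) := by
      apply Real.sqrt_le_sqrt
      apply Finset.sum_le_sum
      intro i _
      simp only [hv']
      split
      · exact le_rfl
      · simpa using sq_nonneg (v i)
    have hθH : 0 ≤ θ * harm K := mul_nonneg hθ (harm_nonneg K)
    calc θ * harm K * Real.sqrt (∑ i, u' i ^ 2) * Real.sqrt (∑ i, v' i ^ 2)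
        ≤ θ * harm K * Real.sqrt (∑ i, u i ^ 2) * Real.sqrt (∑ i, v i ^ 2) := by
          apply mul_le_mul (mul_le_mul_of_nonneg_left h1 hθH) h2 (Real.sqrt_nonneg _) ?_
          positivity
      _ = M := hM.symm
  -- averaging
  have havg := averaging S F
  have hcast : ((2:ℂ) ^ (S.card - 2)) = (((2:ℝ)^(S.card-2) : ℝ) : ℂ) := by push_cast; ring
  have habs : (2:ℝ)^(S.card - 2) * ‖∑ p ∈ S, ∑ q ∈ S.erase p, F p q‖
      = ‖∑ T ∈ S.powerset, (∑ p ∈ T, ∑ q ∈ S \ T, F p q)‖ := by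
    rw [havg, norm_mul, hcast, Complex.norm_real, Real.norm_eq_abs, abs_of_nonneg (by positivity)]
  have hbound : ‖∑ T ∈ S.powerset, (∑ p ∈ T, ∑ q ∈ S \ T, F p q)‖
      ≤ (2:ℝ)^S.card * M := by
    calc ‖∑ T ∈ S.powerset, (∑ p ∈ T, ∑ q ∈ S \ T, F p q)‖
        ≤ ∑ T ∈ S.powerset, ‖∑ p ∈ T, ∑ q ∈ S \ T, F p q‖ :=
          norm_sum_le _ _
      _ ≤ S.powerset.card • M := Finset.sum_le_card_nsmul _ _ M hT
      _ = (2:ℝ)^S.card * M := by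
          rw [Finset.card_powerset, nsmul_eq_mul]
          push_cast
          ring
  have hpow : (2:ℝ)^S.card ≤ 4 * 2^(S.card - 2) := by
    have h4 : (4:ℝ) * 2^(S.card-2) = 2^(S.card - 2 + 2) := by
      rw [pow_add]; ring
    rw [h4]
    apply pow_le_pow_right₀ (by norm_num)
    omega
  have hfinal : (2:ℝ)^(S.card - 2) * ‖∑ p ∈ S, ∑ q ∈ S.erase p, F p q‖
      ≤ (2:ℝ)^(S.card - 2) * (4 * M) := by
    rw [habs]
    calc ‖∑ T ∈ S.powerset, (∑ p ∈ T, ∑ q ∈ S \ T, F p q)‖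
        ≤ (2:ℝ)^S.card * M := hbound
      _ ≤ (4 * 2^(S.card - 2)) * M := mul_le_mul_of_nonneg_right hpow hM0
      _ = (2:ℝ)^(S.card - 2) * (4 * M) := by ring
  have h2pos : (0:ℝ) < 2^(S.card - 2) := by positivity
  have := (mul_le_mul_iff_right₀ h2pos).mp hfinal
  calc ‖∑ p ∈ S, ∑ q ∈ S.erase p, ((u p * v q : ℝ) : ℂ) * gram Φ p q‖
      = ‖∑ p ∈ S, ∑ q ∈ S.erase p, F p q‖ := rfl
    _ ≤ 4 * M := this
    _ = 4 * θ * harm K * Real.sqrt (∑ i, u i ^ 2) * Real.sqrt (∑ i, v i ^ 2) := by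
        rw [hM]; ring

lemma pos_neg_sq (t : ℝ) : max t 0 ^ 2 + max (-t) 0 ^ 2 = t ^ 2 := by
  rcases le_total t 0 with h | h
  · rw [max_eq_right h, max_eq_left (by linarith)]
    ring
  · rw [max_eq_left h, max_eq_right (by linarith)]
    ring

lemma sqrt_split (y : n₀ → ℝ) [Fintype n₀] :
    Real.sqrt (∑ i, max (y i) 0 ^ 2) + Real.sqrt (∑ i, max (-(y i)) 0 ^ 2)
      ≤ Real.sqrt 2 * Real.sqrt (∑ i, y i ^ 2) := by
  set P := Real.sqrt (∑ i, max (y i) 0 ^ 2) with hP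
  set Q := Real.sqrt (∑ i, max (-(y i)) 0 ^ 2) with hQ
  have hP0 : 0 ≤ P := Real.sqrt_nonneg _
  have hQ0 : 0 ≤ Q := Real.sqrt_nonneg _
  have hP2 : P^2 = ∑ i, max (y i) 0 ^ 2 := Real.sq_sqrt (by positivity)
  have hQ2 : Q^2 = ∑ i, max (-(y i)) 0 ^ 2 := Real.sq_sqrt (by positivity)
  have hsum : P^2 + Q^2 = ∑ i, y i ^ 2 := by
    rw [hP2, hQ2, ← Finset.sum_add_distrib]
    exact Finset.sum_congr rfl (fun i _ => pos_neg_sq (y i))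
  rw [← Real.sqrt_mul (by norm_num)]
  rw [show Real.sqrt (∑ i, max (y i) 0 ^ 2) + Real.sqrt (∑ i, max (-(y i)) 0 ^ 2) = P + Q from rfl]
  have h1 : (P + Q)^2 ≤ 2 * ∑ i, y i ^ 2 := by nlinarith [sq_nonneg (P - Q)]
  calc P + Q = Real.sqrt ((P+Q)^2) := (Real.sqrt_sq (by positivity)).symm
    _ ≤ Real.sqrt (2 * ∑ i, y i ^ 2) := Real.sqrt_le_sqrt h1

lemma lemD {m n : Type*} [Fintype m] [Fintype n] [DecidableEq n]
    (Φ : Matrix m n ℂ) (K : ℕ) (θ : ℝ)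
    (hθ : 0 ≤ θ) (hflat : HasFlatRIP Φ K θ)
    (S : Finset n) (hSK : S.card ≤ K)
    (y z : n → ℝ)
    (hys : ∀ i, y i ≠ 0 → i ∈ S) (hzs : ∀ i, z i ≠ 0 → i ∈ S) :
    ‖∑ p ∈ S, ∑ q ∈ S.erase p, ((y p * z q : ℝ) : ℂ) * gram Φ p q‖ ≤
      8 * θ * harm K * Real.sqrt (∑ i, y i ^ 2) * Real.sqrt (∑ i, z i ^ 2) := by
  set a : n → ℝ := fun p => max (y p) 0 with ha
  set b : n → ℝ := fun p => max (-(y p)) 0 with hb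
  set c : n → ℝ := fun p => max (z p) 0 with hc
  set d : n → ℝ := fun p => max (-(z p)) 0 with hd
  have hyab : ∀ p, y p = a p - b p := by
    intro p; simp only [ha, hb]
    rcases le_total (y p) 0 with h | h
    · rw [max_eq_right h, max_eq_left (by linarith)]; ring
    · rw [max_eq_left h, max_eq_right (by linarith)]; ring
  have hzcd : ∀ p, z p = c p - d p := by
    intro p; simp only [hc, hd]
    rcases le_total (z p) 0 with h | h
    · rw [max_eq_right h, max_eq_left (by linarith)]; ring
    · rw [max_eq_left h, max_eq_right (by linarith)]; ring
  have hsupp : ∀ (w : n → ℝ) (hw : ∀ i, w i ≠ 0 → i ∈ S) (i : n),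
      max (w i) 0 ≠ 0 → i ∈ S := by
    intro w hw i h
    apply hw
    intro h0
    rw [h0] at h
    simp at h
  have hsuppn : ∀ (w : n → ℝ) (hw : ∀ i, w i ≠ 0 → i ∈ S) (i : n),
      max (-(w i)) 0 ≠ 0 → i ∈ S := by
    intro w hw i h
    apply hw
    intro h0
    rw [h0] at h
    simp at h
  set D : (n → ℝ) → (n → ℝ) → ℂ := fun u v =>
    ∑ p ∈ S, ∑ q ∈ S.erase p, ((u p * v q : ℝ) : ℂ) * gram Φ p q with hD
  have hsplit : D y z = D a c - D a d - D b c + D b d := by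
    simp only [hD, ← Finset.sum_sub_distrib, ← Finset.sum_add_distrib]
    apply Finset.sum_congr rfl; intro p _
    apply Finset.sum_congr rfl; intro q _
    rw [hyab p, hzcd q]
    push_cast
    ring
  have habs : ‖D y z‖ ≤
      ‖D a c‖ + ‖D a d‖ + ‖D b c‖ + ‖D b d‖ := by
    rw [hsplit]
    calc ‖D a c - D a d - D b c + D b d‖
        ≤ ‖D a c - D a d - D b c‖ + ‖D b d‖ :=
          norm_add_le _ _
      _ ≤ ‖D a c - D a d‖ + ‖D b c‖ + ‖D b d‖ := by
          have := norm_sub_le (D a c - D a d) (D b c)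
          linarith
      _ ≤ ‖D a c‖ + ‖D a d‖ + ‖D b c‖
            + ‖D b d‖ := by
          have := norm_sub_le (D a c) (D a d)
          linarith
  have hnn : ∀ (w : n → ℝ) (i : n), 0 ≤ max (w i) 0 := fun w i => le_max_right _ _
  have h1 := lemC Φ K θ hθ hflat S hSK a c (hnn y) (hnn z) (hsupp y hys) (hsupp z hzs)
  have h2 := lemC Φ K θ hθ hflat S hSK a d (hnn y) (fun i => le_max_right _ _)
    (hsupp y hys) (hsuppn z hzs)
  have h3 := lemC Φ K θ hθ hflat S hSK b c (fun i => le_max_right _ _) (hnn z)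
    (hsuppn y hys) (hsupp z hzs)
  have h4 := lemC Φ K θ hθ hflat S hSK b d (fun i => le_max_right _ _)
    (fun i => le_max_right _ _) (hsuppn y hys) (hsuppn z hzs)
  have hy2 := sqrt_split y
  have hz2 := sqrt_split z
  have hθH : 0 ≤ 4 * θ * harm K := by
    have := harm_nonneg K
    positivity
  set Pa := Real.sqrt (∑ i, a i ^ 2)
  set Pb := Real.sqrt (∑ i, b i ^ 2)
  set Pc := Real.sqrt (∑ i, c i ^ 2)
  set Pd := Real.sqrt (∑ i, d i ^ 2)
  have hPa : 0 ≤ Pa := Real.sqrt_nonneg _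
  have hPb : 0 ≤ Pb := Real.sqrt_nonneg _
  have hPc : 0 ≤ Pc := Real.sqrt_nonneg _
  have hPd : 0 ≤ Pd := Real.sqrt_nonneg _
  have hRy : 0 ≤ Real.sqrt (∑ i, y i ^ 2) := Real.sqrt_nonneg _
  have hRz : 0 ≤ Real.sqrt (∑ i, z i ^ 2) := Real.sqrt_nonneg _
  have hs2 : Real.sqrt 2 * Real.sqrt 2 = 2 := Real.mul_self_sqrt (by norm_num)
  calc ‖D y z‖
      ≤ ‖D a c‖ + ‖D a d‖ + ‖D b c‖
          + ‖D b d‖ := habs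
    _ ≤ 4 * θ * harm K * (Pa * Pc + Pa * Pd + Pb * Pc + Pb * Pd) := by
        simp only [hD] at h1 h2 h3 h4 ⊢
        nlinarith [h1, h2, h3, h4]
    _ = 4 * θ * harm K * ((Pa + Pb) * (Pc + Pd)) := by ring
    _ ≤ 4 * θ * harm K * ((Real.sqrt 2 * Real.sqrt (∑ i, y i ^ 2))
          * (Real.sqrt 2 * Real.sqrt (∑ i, z i ^ 2))) := by
        apply mul_le_mul_of_nonneg_left _ hθH
        apply mul_le_mul hy2 hz2 (by positivity) (by positivity)
    _ = 4 * θ * harm K * ((Real.sqrt 2 * Real.sqrt 2)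
          * (Real.sqrt (∑ i, y i ^ 2) * Real.sqrt (∑ i, z i ^ 2))) := by ring
    _ = 8 * θ * harm K * Real.sqrt (∑ i, y i ^ 2) * Real.sqrt (∑ i, z i ^ 2) := by
        rw [hs2]; ring

/-- flat RIP implies RIP: if each column of the `M × N` matrix `Φ` has
unit ℓ₂-norm, `K ≤ M ≤ N`, `θ > 0`, and `Φ` has the `(K, θ)`-flat RIP, then `Φ` has
the `(K, 150·θ·log K)`-RIP. -/
theorem stmt_9 {m n : Type*} [Fintype m] [Fintype n]
    (Φ : Matrix m n ℂ) (K : ℕ) (θ : ℝ)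
    (hcols : ∀ j : n, ∑ i, ‖Φ i j‖ ^ 2 = 1)
    (hKM : K ≤ Fintype.card m) (hMN : Fintype.card m ≤ Fintype.card n)
    (hθ : 0 < θ) (hflat : HasFlatRIP Φ K θ) :
    HasRIP Φ K (150 * θ * Real.log K) := by
  classical
  intro x hx
  set S : Finset n := Finset.univ.filter (fun j => x j ≠ 0) with hS
  have hxS : ∀ j, x j ≠ 0 → j ∈ S := by
    intro j hj; rw [hS]; simp [hj]
  have hxS' : ∀ j, j ∉ S → x j = 0 := by
    intro j hj; by_contra h; exact hj (hxS j h)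
  have hcard : S.card ≤ K := by
    have hcoe : {j | x j ≠ 0} = ↑S := by ext j; simp [hS]
    rw [hcoe, Set.ncard_coe_finset] at hx
    exact hx
  set B := ∑ j, ‖x j‖ ^ 2 with hB
  have hB0 : 0 ≤ B := Finset.sum_nonneg (fun j _ => by positivity)
  set δ := 150 * θ * Real.log K with hδ
  have hδ0 : 0 ≤ δ := by
    rcases Nat.eq_zero_or_pos K with k0 | kp
    · simp [hδ, k0, Real.log_zero]
    · have : (0:ℝ) ≤ Real.log K := Real.log_nonneg (by exact_mod_cast kp)
      rw [hδ]; positivity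
  set Zoff := ∑ p ∈ S, ∑ q ∈ S.erase p, (x p * (starRingEnd ℂ) (x q)) * gram Φ p q with hZoff
  -- diagonal of the Gram matrix
  have hgram_diag : ∀ p : n, gram Φ p p = 1 := by
    intro p
    have : gram Φ p p = ((∑ l, ‖Φ l p‖ ^ 2 : ℝ) : ℂ) := by
      rw [gram]
      push_cast
      apply Finset.sum_congr rfl
      intro l _
      rw [Complex.mul_conj, ← Complex.sq_norm]
      push_cast
      ring
    rw [this, hcols p]
    norm_num
  -- key identity
  have hA : ∑ i, ‖∑ j, Φ i j * x j‖ ^ 2 = B + Zoff.re := by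
    have h1 : ∑ i, ‖∑ j, Φ i j * x j‖ ^ 2
        = (∑ l, (∑ j, Φ l j * x j) * (starRingEnd ℂ) (∑ j, Φ l j * x j)).re := by
      rw [Complex.re_sum]
      apply Finset.sum_congr rfl
      intro l _
      rw [Complex.mul_conj, Complex.ofReal_re, Complex.sq_norm]
    have e1 : ∀ l : m, (∑ j, Φ l j * x j) * (starRingEnd ℂ) (∑ j, Φ l j * x j)
        = ∑ p, ∑ q, (Φ l p * x p) * ((starRingEnd ℂ) (Φ l q) * (starRingEnd ℂ) (x q)) := by
      intro l
      rw [map_sum, Finset.sum_mul_sum]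
      simp only [map_mul]
    have h2 : ∑ l, (∑ j, Φ l j * x j) * (starRingEnd ℂ) (∑ j, Φ l j * x j)
        = ∑ p, ∑ q, (x p * (starRingEnd ℂ) (x q)) * gram Φ p q :=
      calc ∑ l, (∑ j, Φ l j * x j) * (starRingEnd ℂ) (∑ j, Φ l j * x j)
          = ∑ l : m, ∑ p, ∑ q, (Φ l p * x p)
              * ((starRingEnd ℂ) (Φ l q) * (starRingEnd ℂ) (x q)) :=
            Finset.sum_congr rfl (fun l _ => e1 l)
        _ = ∑ p, ∑ l : m, ∑ q, (Φ l p * x p)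
              * ((starRingEnd ℂ) (Φ l q) * (starRingEnd ℂ) (x q)) :=
            Finset.sum_comm
        _ = ∑ p, ∑ q, ∑ l : m, (Φ l p * x p)
              * ((starRingEnd ℂ) (Φ l q) * (starRingEnd ℂ) (x q)) :=
            Finset.sum_congr rfl (fun p _ => Finset.sum_comm)
        _ = ∑ p, ∑ q, (x p * (starRingEnd ℂ) (x q)) * gram Φ p q := by
            apply Finset.sum_congr rfl; intro p _
            apply Finset.sum_congr rfl; intro q _
            rw [gram, Finset.mul_sum]
            apply Finset.sum_congr rfl; intro l _
            ring
    have h3 : ∑ p, ∑ q, (x p * (starRingEnd ℂ) (x q)) * gram Φ p q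
        = ∑ p ∈ S, ∑ q ∈ S, (x p * (starRingEnd ℂ) (x q)) * gram Φ p q := by
      rw [← Finset.sum_subset S.subset_univ (fun p _ hp => by
        rw [Finset.sum_eq_zero]
        intro q _
        rw [hxS' p hp]; ring)]
      apply Finset.sum_congr rfl
      intro p _
      rw [← Finset.sum_subset S.subset_univ (fun q _ hq => by
        rw [hxS' q hq]; simp)]
    have h4 : ∑ p ∈ S, ∑ q ∈ S, (x p * (starRingEnd ℂ) (x q)) * gram Φ p q
        = (B : ℂ) + Zoff := by
      have h5 : ∀ p ∈ S, ∑ q ∈ S, (x p * (starRingEnd ℂ) (x q)) * gram Φ p q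
          = ((‖x p‖ ^ 2 : ℝ) : ℂ)
            + ∑ q ∈ S.erase p, (x p * (starRingEnd ℂ) (x q)) * gram Φ p q := by
        intro p hp
        rw [← Finset.sum_erase_add S _ hp, hgram_diag p, mul_one, Complex.mul_conj,
          Complex.sq_norm]
        push_cast
        ring
      rw [Finset.sum_congr rfl h5, Finset.sum_add_distrib]
      congr 1
      · rw [hB, ← Finset.sum_subset S.subset_univ (fun j _ hj => by
          rw [hxS' j hj]; simp)]
        push_cast
        rfl
    rw [h1, h2, h3, h4]
    simp
  -- bound on the off-diagonal part
  have hre : |Zoff.re| ≤ ‖Zoff‖ := Complex.abs_re_le_norm Zoff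
  rcases le_or_gt S.card 1 with hs1 | hs2
  · -- at most one nonzero coordinate: Zoff = 0
    have hz : Zoff = 0 := by
      rw [hZoff]
      apply Finset.sum_eq_zero
      intro p hp
      apply Finset.sum_eq_zero
      intro q hq
      exfalso
      rw [Finset.mem_erase] at hq
      have hsub : ({p, q} : Finset n) ⊆ S := by
        intro a ha
        rcases Finset.mem_insert.mp ha with rfl | ha'
        · exact hp
        · rw [Finset.mem_singleton] at ha'; exact ha' ▸ hq.2
      have : ({p, q} : Finset n).card = 2 := by
        rw [Finset.card_insert_of_notMem (by simp [Ne.symm hq.1]), Finset.card_singleton]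
      have := Finset.card_le_card hsub
      omega
    rw [hz] at hA
    simp only [Complex.zero_re, add_zero] at hA
    rw [hA]
    constructor <;> nlinarith
  · -- main case
    have hK2 : 2 ≤ K := le_trans hs2 hcard
    set r : n → ℝ := fun p => (x p).re with hr
    set mi : n → ℝ := fun p => (x p).im with hmi
    have hrs : ∀ i, r i ≠ 0 → i ∈ S := by
      intro i h; apply hxS; intro h0; exact h (by simp [hr, h0])
    have hms : ∀ i, mi i ≠ 0 → i ∈ S := by
      intro i h; apply hxS; intro h0; exact h (by simp [hmi, h0])
    set Drr := ∑ p ∈ S, ∑ q ∈ S.erase p, ((r p * r q : ℝ) : ℂ) * gram Φ p q with hDrr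
    set Dmm := ∑ p ∈ S, ∑ q ∈ S.erase p, ((mi p * mi q : ℝ) : ℂ) * gram Φ p q with hDmm
    set Dmr := ∑ p ∈ S, ∑ q ∈ S.erase p, ((mi p * r q : ℝ) : ℂ) * gram Φ p q with hDmr
    set Drm := ∑ p ∈ S, ∑ q ∈ S.erase p, ((r p * mi q : ℝ) : ℂ) * gram Φ p q with hDrm
    have hZdec : Zoff = Drr + Dmm + Complex.I * Dmr - Complex.I * Drm := by
      simp only [hZoff, hDrr, hDmm, hDmr, hDrm, Finset.mul_sum,
        ← Finset.sum_add_distrib, ← Finset.sum_sub_distrib]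
      apply Finset.sum_congr rfl; intro p _
      apply Finset.sum_congr rfl; intro q _
      have hx1 : x p * (starRingEnd ℂ) (x q)
          = ((r p * r q + mi p * mi q : ℝ) : ℂ)
            + ((mi p * r q - r p * mi q : ℝ) : ℂ) * Complex.I := by
        apply Complex.ext <;>
          simp [Complex.mul_re, Complex.mul_im, Complex.add_re, Complex.add_im, hr, hmi] <;>
          ring
      rw [hx1]
      push_cast
      ring
    have h1 := lemD Φ K θ hθ.le hflat S hcard r r hrs hrs
    have h2 := lemD Φ K θ hθ.le hflat S hcard mi mi hms hms
    have h3 := lemD Φ K θ hθ.le hflat S hcard mi r hms hrs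
    have h4 := lemD Φ K θ hθ.le hflat S hcard r mi hrs hms
    set Rr := Real.sqrt (∑ i, r i ^ 2) with hRr
    set Rm := Real.sqrt (∑ i, mi i ^ 2) with hRm
    have hRr0 : 0 ≤ Rr := Real.sqrt_nonneg _
    have hRm0 : 0 ≤ Rm := Real.sqrt_nonneg _
    have hRr2 : Rr ^ 2 = ∑ i, r i ^ 2 := Real.sq_sqrt (by positivity)
    have hRm2 : Rm ^ 2 = ∑ i, mi i ^ 2 := Real.sq_sqrt (by positivity)
    have hBsum : Rr ^ 2 + Rm ^ 2 = B := by
      rw [hRr2, hRm2, hB, ← Finset.sum_add_distrib]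
      apply Finset.sum_congr rfl
      intro j _
      rw [Complex.sq_norm, Complex.normSq_apply, hr, hmi]
      ring
    have hH0 := harm_nonneg K
    have hZabs : ‖Zoff‖ ≤ 16 * θ * harm K * B := by
      calc ‖Zoff‖
          = ‖Drr + Dmm + Complex.I * Dmr - Complex.I * Drm‖ := by rw [hZdec]
        _ ≤ ‖Drr‖ + ‖Dmm‖ + ‖Dmr‖ + ‖Drm‖ := by
            have t1 := norm_add_le (Drr + Dmm + Complex.I * Dmr) (-(Complex.I * Drm))
            have t2 := norm_add_le (Drr + Dmm) (Complex.I * Dmr)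
            have t3 := norm_add_le Drr Dmm
            rw [← sub_eq_add_neg] at t1
            rw [norm_neg] at t1
            rw [norm_mul, Complex.norm_I, one_mul] at t1 t2
            linarith
        _ ≤ 8 * θ * harm K * Rr * Rr + 8 * θ * harm K * Rm * Rm
              + 8 * θ * harm K * Rm * Rr + 8 * θ * harm K * Rr * Rm := by
            rw [hDrr, hDmm, hDmr, hDrm]
            linarith [h1, h2, h3, h4]
        _ = 8 * θ * harm K * (Rr + Rm)^2 := by ring
        _ ≤ 8 * θ * harm K * (2 * (Rr^2 + Rm^2)) := by
            apply mul_le_mul_of_nonneg_left _ (by positivity)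
            nlinarith [sq_nonneg (Rr - Rm)]
        _ = 16 * θ * harm K * B := by rw [hBsum]; ring
    -- numeric comparison
    have hnum : 16 * harm K ≤ 150 * Real.log K := by
      have hh := harm_le K (by omega)
      have hlog2 : Real.log 2 ≤ Real.log K := by
        apply Real.log_le_log (by norm_num)
        exact_mod_cast hK2
      have := Real.log_two_gt_d9
      linarith
    have hfin : |Zoff.re| ≤ δ * B := by
      have : ‖Zoff‖ ≤ δ * B := by
        calc ‖Zoff‖ ≤ 16 * θ * harm K * B := hZabs
          _ ≤ 150 * θ * Real.log K * B := by
              have h := mul_le_mul_of_nonneg_right hnum (mul_nonneg hθ.le hB0)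
              nlinarith [h]
          _ = δ * B := by rw [hδ]
      linarith
    rw [hA]
    rw [abs_le] at hfin
    constructor <;> linarith [hfin.1, hfin.2]
end
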